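/- Let Δ be the set of maps g : E → F with g(0) = 0 where E is a normed space and F a Banach space, and fix a function φ : E → [0,∞). Define d(g,h) = inf { c ∈ (0,∞) : ‖g(a) − h(a)‖ ≤ c·φ(a) for all a ∈ E } (with d(g,h) = ∞ if no such c exists). Then d is a generalized (extended-valued) metric on Δ and (Δ, d) is complete. -/

import Mathlib

open Filter Topology ENNReal

private lemma aux_zero {x p : ℝ} (hx : 0 ≤ x) (hp : 0 ≤ p)
    (h : ∀ δ : ℝ, 0 < δ → x ≤ δ * p) : x = 0 := by
  by_contra hne
  have hx0 : 0 < x := lt_of_le_of_ne hx (Ne.symm hne)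
  have h2 := h (x / (2 * (p + 1))) (by positivity)
  rw [div_mul_eq_mul_div, le_div_iff₀ (by positivity)] at h2
  nlinarith

theorem generalized_metric_complete {E F : Type*}
    [NormedAddCommGroup E] [NormedSpace ℝ E]
    [NormedAddCommGroup F] [NormedSpace ℝ F] [CompleteSpace F]
    (φ : E → ℝ) (hφ0 : ∀ a, 0 ≤ φ a)
    (d : {g : E → F // g 0 = 0} → {g : E → F // g 0 = 0} → ℝ≥0∞)
    (hd : ∀ g h, d g h = sInf {c : ℝ≥0∞ | 0 < c ∧ c ≠ ⊤ ∧
      ∀ a : E, ‖g.1 a - h.1 a‖ ≤ c.toReal * φ a}) :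
    (∀ g h, d g h = 0 ↔ g = h) ∧
    (∀ g h, d g h = d h g) ∧
    (∀ g h l, d g l ≤ d g h + d h l) ∧
    (∀ u : ℕ → {g : E → F // g 0 = 0},
      (∀ ε : ℝ≥0∞, 0 < ε → ∃ N : ℕ, ∀ m n : ℕ, N ≤ m → N ≤ n → d (u m) (u n) < ε) →
      ∃ g, ∀ ε : ℝ≥0∞, 0 < ε → ∃ N : ℕ, ∀ n : ℕ, N ≤ n → d (u n) g < ε) := by
  -- key extraction lemma
  have key : ∀ (g h : {g : E → F // g 0 = 0}) (ε : ℝ≥0∞), d g h < ε →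
      ∃ c : ℝ≥0∞, (0 < c ∧ c ≠ ⊤ ∧ ∀ a : E, ‖g.1 a - h.1 a‖ ≤ c.toReal * φ a) ∧ c < ε := by
    intro g h ε hlt
    rw [hd] at hlt
    exact sInf_lt_iff.mp hlt
  refine ⟨?_, ?_, ?_, ?_⟩
  · -- d g h = 0 ↔ g = h
    intro g h
    constructor
    · intro h0
      apply Subtype.ext
      funext a
      have hnorm : ‖g.1 a - h.1 a‖ = 0 := by
        apply aux_zero (norm_nonneg _) (hφ0 a)
        intro δ hδ
        have hlt : d g h < ENNReal.ofReal δ := by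
          rw [h0]; exact ENNReal.ofReal_pos.mpr hδ
        obtain ⟨c, ⟨hc0, hct, hc⟩, hcδ⟩ := key g h _ hlt
        calc ‖g.1 a - h.1 a‖ ≤ c.toReal * φ a := hc a
          _ ≤ δ * φ a := by
            apply mul_le_mul_of_nonneg_right _ (hφ0 a)
            exact ENNReal.toReal_le_of_le_ofReal hδ.le hcδ.le
      rw [norm_eq_zero, sub_eq_zero] at hnorm
      exact hnorm
    · intro hgh
      subst hgh
      rw [hd]
      apply le_antisymm _ zero_le
      refine ENNReal.le_of_forall_pos_le_add fun ε hε _ => ?_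
      rw [zero_add]
      refine sInf_le ⟨?_, ENNReal.coe_ne_top, fun a => ?_⟩
      · exact_mod_cast hε
      · simp only [sub_self, norm_zero]
        exact mul_nonneg ENNReal.toReal_nonneg (hφ0 a)
  · -- symmetry
    intro g h
    rw [hd, hd]
    congr 1
    ext c
    simp only [Set.mem_setOf_eq]
    constructor
    · rintro ⟨h1, h2, h3⟩
      exact ⟨h1, h2, fun a => by rw [norm_sub_rev]; exact h3 a⟩
    · rintro ⟨h1, h2, h3⟩
      exact ⟨h1, h2, fun a => by rw [norm_sub_rev]; exact h3 a⟩
  · -- triangle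
    intro g h l
    rcases eq_top_or_lt_top (d g h) with h1 | h1
    · simp [h1]
    rcases eq_top_or_lt_top (d h l) with h2 | h2
    · simp [h2]
    refine ENNReal.le_of_forall_pos_le_add fun ε hε hfin => ?_
    have hε2 : ((ε : ℝ≥0∞) / 2) ≠ 0 :=
      (ENNReal.div_pos (by exact_mod_cast hε.ne') ENNReal.ofNat_ne_top).ne'
    have hgh : d g h < d g h + ε / 2 := ENNReal.lt_add_right h1.ne hε2
    have hhl : d h l < d h l + ε / 2 := ENNReal.lt_add_right h2.ne hε2
    obtain ⟨c₁, ⟨hc₁0, hc₁t, hc₁⟩, hlt₁⟩ := key g h _ hgh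
    obtain ⟨c₂, ⟨hc₂0, hc₂t, hc₂⟩, hlt₂⟩ := key h l _ hhl
    have hle : d g l ≤ c₁ + c₂ := by
      rw [hd]
      refine sInf_le ⟨lt_of_lt_of_le hc₁0 le_self_add, ENNReal.add_ne_top.mpr ⟨hc₁t, hc₂t⟩, fun a => ?_⟩
      have tri : ‖g.1 a - l.1 a‖ ≤ ‖g.1 a - h.1 a‖ + ‖h.1 a - l.1 a‖ := by
        rw [← sub_add_sub_cancel (g.1 a) (h.1 a) (l.1 a)]
        exact norm_add_le _ _
      calc ‖g.1 a - l.1 a‖ ≤ ‖g.1 a - h.1 a‖ + ‖h.1 a - l.1 a‖ := tri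
        _ ≤ c₁.toReal * φ a + c₂.toReal * φ a := add_le_add (hc₁ a) (hc₂ a)
        _ = (c₁ + c₂).toReal * φ a := by rw [ENNReal.toReal_add hc₁t hc₂t]; ring
    calc d g l ≤ c₁ + c₂ := hle
      _ ≤ (d g h + ε / 2) + (d h l + ε / 2) := add_le_add hlt₁.le hlt₂.le
      _ = d g h + d h l + ε := by
        rw [add_add_add_comm, ENNReal.add_halves]
  · -- completeness
    intro u hu
    have cauchy_pt : ∀ a : E, CauchySeq (fun n => (u n).1 a) := by
      intro a
      rw [Metric.cauchySeq_iff]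
      intro δ hδ
      obtain ⟨N, hN⟩ := hu (ENNReal.ofReal (δ / (φ a + 1)))
        (ENNReal.ofReal_pos.mpr (div_pos hδ (by linarith [hφ0 a])))
      refine ⟨N, fun m hm n hn => ?_⟩
      obtain ⟨c, ⟨hc0, hct, hc⟩, hcδ⟩ := key (u m) (u n) _ (hN m n hm hn)
      have hb : ‖(u m).1 a - (u n).1 a‖ ≤ δ / (φ a + 1) * φ a := by
        calc ‖(u m).1 a - (u n).1 a‖ ≤ c.toReal * φ a := hc a
          _ ≤ δ / (φ a + 1) * φ a := by
            apply mul_le_mul_of_nonneg_right _ (hφ0 a)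
            exact ENNReal.toReal_le_of_le_ofReal (div_pos hδ (by linarith [hφ0 a])).le hcδ.le
      rw [dist_eq_norm]
      have hlt : δ / (φ a + 1) * φ a < δ := by
        rw [div_mul_eq_mul_div, div_lt_iff₀ (by linarith [hφ0 a])]
        nlinarith [hφ0 a]
      exact lt_of_le_of_lt hb hlt
    have hlim := fun a => cauchySeq_tendsto_of_complete (cauchy_pt a)
    choose g hg using hlim
    have hg0 : g 0 = 0 := by
      have h1 : Tendsto (fun n => (u n).1 0) atTop (𝓝 (0 : F)) := by
        have : (fun n => (u n).1 0) = fun _ => (0 : F) := funext fun n => (u n).2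
        rw [this]; exact tendsto_const_nhds
      exact tendsto_nhds_unique (hg 0) h1
    refine ⟨⟨g, hg0⟩, fun ε hε => ?_⟩
    set δ : ℝ≥0∞ := min ε 1 / 2 with hδdef
    have hmin0 : (0 : ℝ≥0∞) < min ε 1 := lt_min hε one_pos
    have hmint : min ε 1 ≠ ⊤ := ne_top_of_le_ne_top one_ne_top (min_le_right _ _)
    have hδ0 : 0 < δ := ENNReal.half_pos hmin0.ne'
    have hδt : δ ≠ ⊤ :=
      ne_top_of_le_ne_top hmint ENNReal.half_le_self
    have hδε : δ < ε := lt_of_lt_of_le (ENNReal.half_lt_self hmin0.ne' hmint) (min_le_left _ _)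
    obtain ⟨N, hN⟩ := hu δ hδ0
    refine ⟨N, fun n hn => ?_⟩
    have hb : ∀ a : E, ‖(u n).1 a - g a‖ ≤ δ.toReal * φ a := by
      intro a
      have ht : Tendsto (fun m => ‖(u n).1 a - (u m).1 a‖) atTop
          (𝓝 ‖(u n).1 a - g a‖) := ((tendsto_const_nhds.sub (hg a)).norm)
      refine le_of_tendsto ht (eventually_atTop.2 ⟨N, fun m hm => ?_⟩)
      obtain ⟨c, ⟨hc0, hct, hc⟩, hcδ⟩ := key (u n) (u m) _ (hN n m hn hm)
      calc ‖(u n).1 a - (u m).1 a‖ ≤ c.toReal * φ a := hc a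
        _ ≤ δ.toReal * φ a := mul_le_mul_of_nonneg_right
            ((ENNReal.toReal_le_toReal hct hδt).mpr hcδ.le) (hφ0 a)
    have hle : d (u n) ⟨g, hg0⟩ ≤ δ := by
      rw [hd]
      exact sInf_le ⟨hδ0, hδt, hb⟩
    exact lt_of_le_of_lt hle hδε
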